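/- With notation as in the Corrugation Process, if γ is continuously differentiable in x, then for every i ≠ j, ‖∂_i f₁ − ∂_i f₀‖_∞ ≤ (2‖∂_i γ‖_∞)/N. -/

import Mathlib

open MeasureTheory intervalIntegral

/-- Corrugation Process: control of derivatives in the directions `i ≠ j`:
`‖∂ᵢ f₁ − ∂ᵢ f₀‖_∞ ≤ 2‖∂ᵢ γ‖_∞ / N`. -/
theorem corrugation_process_other_derivatives {m n : ℕ}
    (f₀ : (Fin m → ℝ) → EuclideanSpace ℝ (Fin n))
    (hf₀ : ContDiff ℝ 1 f₀)
    (γ : (Fin m → ℝ) → ℝ → EuclideanSpace ℝ (Fin n))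
    (hγ : Continuous fun p : (Fin m → ℝ) × ℝ => γ p.1 p.2)
    (hγdiff : ∀ s, Differentiable ℝ fun x => γ x s)
    (hper : ∀ x s, γ x (s + 1) = γ x s)
    (j i : Fin m) (hij : i ≠ j)
    (C : ℝ)
    (hC : ∀ x s, ‖fderiv ℝ (fun y => γ y s) x (Pi.single i 1 : Fin m → ℝ)‖ ≤ C)
    (N : ℝ) (hN : 0 < N)
    (f₁ : (Fin m → ℝ) → EuclideanSpace ℝ (Fin n))
    (hf₁ : ∀ x, f₁ x = f₀ x + (1 / N) •
      ∫ s in (0:ℝ)..(N * x j), (γ x s - ∫ u in (0:ℝ)..1, γ x u))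
    (hf₁diff : Differentiable ℝ f₁) :
    ∀ x, ‖fderiv ℝ f₁ x (Pi.single i 1 : Fin m → ℝ) -
          fderiv ℝ f₀ x (Pi.single i 1 : Fin m → ℝ)‖ ≤ 2 * C / N := by
  intro x
  set e : (Fin m → ℝ) := Pi.single i 1 with he
  have hC0 : 0 ≤ C := le_trans (norm_nonneg _) (hC x 0)
  have hcont : ∀ y : Fin m → ℝ, Continuous fun s => γ y s := fun y =>
    hγ.comp (continuous_const.prodMk continuous_id)
  set c : (Fin m → ℝ) → EuclideanSpace ℝ (Fin n) := fun y => ∫ u in (0:ℝ)..1, γ y u with hc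
  set Γ : (Fin m → ℝ) → ℝ → EuclideanSpace ℝ (Fin n) :=
    fun y T => ∫ s in (0:ℝ)..T, (γ y s - c y) with hΓdef
  have hint : ∀ (y : Fin m → ℝ) (a b : ℝ),
      IntervalIntegrable (fun s => γ y s - c y) volume a b := fun y a b =>
    ((hcont y).sub continuous_const).intervalIntegrable a b
  have hint' : ∀ (y : Fin m → ℝ) (a b : ℝ),
      IntervalIntegrable (fun s => γ y s) volume a b := fun y a b =>
    (hcont y).intervalIntegrable a b
  -- periodicity of Γ y in T
  have hΓper : ∀ y, Function.Periodic (Γ y) 1 := by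
    intro y T
    have hpp : Function.Periodic (fun s => γ y s - c y) 1 := fun s => by
      simp [hper y s]
    have hsplit : Γ y (T + 1) = Γ y T + ∫ s in T..(T + 1), (γ y s - c y) := by
      simp only [hΓdef]
      rw [← intervalIntegral.integral_add_adjacent_intervals (hint y 0 T) (hint y T (T + 1))]
    have hlast : (∫ s in T..(T + 1), (γ y s - c y)) = ∫ s in (0:ℝ)..(0 + 1), (γ y s - c y) :=
      hpp.intervalIntegral_add_eq T 0
    have hzero : (∫ s in (0:ℝ)..(0 + 1), (γ y s - c y)) = 0 := by
      rw [zero_add, intervalIntegral.integral_sub (hint' y 0 1)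
        (intervalIntegrable_const), intervalIntegral.integral_const]
      simp [hc]
    rw [hsplit, hlast, hzero, add_zero]
  have hfract : ∀ (y : Fin m → ℝ) (T : ℝ), Γ y (Int.fract T) = Γ y T := by
    intro y T
    have h := (hΓper y).sub_int_mul_eq (x := T) ⌊T⌋
    rw [mul_one] at h
    rw [Int.fract]
    exact h
  -- Lipschitz estimate in the direction e
  have hlip : ∀ (t s : ℝ), ‖γ (x + t • e) s - γ x s‖ ≤ C * |t| := by
    intro t s
    have hder : ∀ u : ℝ, HasDerivAt (fun r : ℝ => γ (x + r • e) s)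
        (fderiv ℝ (fun y => γ y s) (x + u • e) e) u := by
      intro u
      have hline : HasDerivAt (fun r : ℝ => x + r • e) ((1 : ℝ) • e) u :=
        ((hasDerivAt_id u).smul_const e).const_add x
      rw [one_smul] at hline
      exact ((hγdiff s (x + u • e)).hasFDerivAt).comp_hasDerivAt u hline
    have := Convex.norm_image_sub_le_of_norm_hasDerivWithin_le
      (f := fun r : ℝ => γ (x + r • e) s)
      (f' := fun u => fderiv ℝ (fun y => γ y s) (x + u • e) e)
      (s := Set.univ)
      (fun u _ => (hder u).hasDerivWithinAt)
      (fun u _ => hC (x + u • e) s) convex_univ (Set.mem_univ 0) (Set.mem_univ t)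
    simpa using this
  -- the averaged term
  have hclip : ∀ t : ℝ, ‖c (x + t • e) - c x‖ ≤ C * |t| := by
    intro t
    have : c (x + t • e) - c x = ∫ u in (0:ℝ)..1, (γ (x + t • e) u - γ x u) := by
      rw [intervalIntegral.integral_sub (hint' _ 0 1) (hint' x 0 1)]
    rw [this]
    have := intervalIntegral.norm_integral_le_of_norm_le_const
      (a := (0:ℝ)) (b := 1) (C := C * |t|)
      (f := fun u => γ (x + t • e) u - γ x u) (fun u _ => hlip t u)
    simpa using this
  -- estimate of Γ variation for T' ∈ [0,1]
  have hΓlip : ∀ (t T' : ℝ), 0 ≤ T' → T' ≤ 1 →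
      ‖Γ (x + t • e) T' - Γ x T'‖ ≤ 2 * C * |t| := by
    intro t T' h0 h1
    have heq : Γ (x + t • e) T' - Γ x T' =
        ∫ s in (0:ℝ)..T', ((γ (x + t • e) s - c (x + t • e)) - (γ x s - c x)) := by
      simp only [hΓdef]
      rw [intervalIntegral.integral_sub (hint _ 0 T') (hint x 0 T')]
    rw [heq]
    have hbound : ∀ s ∈ Set.uIoc (0:ℝ) T',
        ‖(γ (x + t • e) s - c (x + t • e)) - (γ x s - c x)‖ ≤ 2 * C * |t| := by
      intro s _
      have : (γ (x + t • e) s - c (x + t • e)) - (γ x s - c x) =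
          (γ (x + t • e) s - γ x s) - (c (x + t • e) - c x) := by abel
      rw [this]
      calc ‖(γ (x + t • e) s - γ x s) - (c (x + t • e) - c x)‖
          ≤ ‖γ (x + t • e) s - γ x s‖ + ‖c (x + t • e) - c x‖ := norm_sub_le _ _
        _ ≤ C * |t| + C * |t| := add_le_add (hlip t s) (hclip t)
        _ = 2 * C * |t| := by ring
    have := intervalIntegral.norm_integral_le_of_norm_le_const hbound
    have habs : |T' - 0| ≤ 1 := by rw [sub_zero, abs_of_nonneg h0]; exact h1
    calc ‖∫ s in (0:ℝ)..T', ((γ (x + t • e) s - c (x + t • e)) - (γ x s - c x))‖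
        ≤ 2 * C * |t| * |T' - 0| := this
      _ ≤ 2 * C * |t| * 1 := by
          apply mul_le_mul_of_nonneg_left habs
          positivity
      _ = 2 * C * |t| := mul_one _
  -- g = f₁ - f₀
  have hf₀d : Differentiable ℝ f₀ := hf₀.differentiable one_ne_zero
  set g : (Fin m → ℝ) → EuclideanSpace ℝ (Fin n) := fun y => f₁ y - f₀ y with hg
  have hgdiff : Differentiable ℝ g := hf₁diff.sub hf₀d
  have hgval : ∀ y, g y = (1 / N) • Γ y (N * y j) := by
    intro y
    simp only [hg, hf₁ y, hΓdef, hc]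
    abel
  -- the j-th coordinate is unchanged along e
  have hcoord : ∀ t : ℝ, (x + t • e) j = x j := by
    intro t
    have : e j = 0 := Pi.single_eq_of_ne hij.symm 1
    simp [this]
  -- slope bound for g along e
  have hslope : ∀ t : ℝ, ‖g (x + t • e) - g x‖ ≤ 2 * C / N * |t| := by
    intro t
    have hT : N * (x + t • e) j = N * x j := by rw [hcoord]
    rw [hgval, hgval, hT, ← smul_sub, norm_smul]
    have h1 : Γ (x + t • e) (N * x j) - Γ x (N * x j) =
        Γ (x + t • e) (Int.fract (N * x j)) - Γ x (Int.fract (N * x j)) := by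
      rw [hfract, hfract]
    rw [h1]
    have h2 := hΓlip t (Int.fract (N * x j)) (Int.fract_nonneg _) (Int.fract_lt_one _).le
    have h3 : ‖(1 / N : ℝ)‖ = 1 / N := by
      rw [Real.norm_eq_abs, abs_of_pos]; positivity
    rw [h3]
    calc (1 / N) * ‖Γ (x + t • e) (Int.fract (N * x j)) - Γ x (Int.fract (N * x j))‖
        ≤ (1 / N) * (2 * C * |t|) := by
          apply mul_le_mul_of_nonneg_left h2; positivity
      _ = 2 * C / N * |t| := by ring
  -- connect derivatives
  have hfd : fderiv ℝ f₁ x e - fderiv ℝ f₀ x e = fderiv ℝ g x e := by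
    rw [hg, fderiv_fun_sub (hf₁diff x) (hf₀d x)]; rfl
  rw [hfd]
  set d := fderiv ℝ g x e with hd
  have hline0 : HasDerivAt (fun r : ℝ => x + r • e) ((1 : ℝ) • e) 0 :=
    ((hasDerivAt_id 0).smul_const e).const_add x
  rw [one_smul] at hline0
  have hcomp : HasDerivAt (fun t : ℝ => g (x + t • e)) d 0 := by
    have h0 : x = x + (0:ℝ) • e := by simp
    have := (hgdiff x).hasFDerivAt.comp_hasDerivAt_of_eq 0 hline0 h0
    exact this
  have htend := hasDerivAt_iff_tendsto_slope.mp hcomp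
  refine le_of_tendsto htend.norm ?_
  filter_upwards [self_mem_nhdsWithin] with t ht
  have ht0 : t ≠ 0 := ht
  rw [slope_def_module]
  rw [norm_smul]
  have h4 : ‖(t - 0)⁻¹‖ = |t|⁻¹ := by rw [sub_zero, Real.norm_eq_abs, abs_inv]
  rw [h4]
  have h5 : g (x + t • e) - g (x + (0:ℝ) • e) = g (x + t • e) - g x := by simp
  rw [h5]
  have h6 := hslope t
  have h7 : |t| ≠ 0 := abs_ne_zero.mpr ht0
  calc |t|⁻¹ * ‖g (x + t • e) - g x‖ ≤ |t|⁻¹ * (2 * C / N * |t|) := by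
        apply mul_le_mul_of_nonneg_left h6; positivity
    _ = 2 * C / N := by field_simp
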